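/- arXiv:1304.7147 — 2 statements merged into one kernel-verified Lean document; each statement's English description precedes it below -/
import Mathlib

section
/- Let l_0,...,l_N be the Lagrange interpolating polynomials on distinct nodes ξ_0 < ξ_1 < ... < ξ_N, and define ε_i(ξ) = -∑_{k=0}^{i-1} dl_k/dξ for i = 1,...,N. Then for all i, j ∈ {1,...,N}, ∫_{ξ_{j-1}}^{ξ_j} ε_i(ξ) dξ = δ_{i,j}. -/
open Polynomial intervalIntegral

/-- The edge polynomial `ε_i(ξ) = -∑_{k=0}^{i-1} dl_k/dξ`. -/
noncomputable def edgePoly (l : ℕ → Polynomial ℝ) (i : ℕ) : Polynomial ℝ :=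
  -∑ k ∈ Finset.range i, Polynomial.derivative (l k)

lemma integral_derivative_eval (p : Polynomial ℝ) (a b : ℝ) :
    (∫ x in a..b, (Polynomial.derivative p).eval x) = p.eval b - p.eval a := by
  apply intervalIntegral.integral_eq_sub_of_hasDerivAt
  · intro x _
    simpa using p.hasDerivAt x
  · exact (Polynomial.continuous _).intervalIntegrable a b

/-- For Lagrange interpolating polynomials `l_0, …, l_N` on distinct ordered nodes
`ξ_0 < ξ_1 < ⋯ < ξ_N`, the edge polynomials satisfy
`∫_{ξ_{j-1}}^{ξ_j} ε_i(ξ) dξ = δ_{i,j}` for all `1 ≤ i, j ≤ N`. -/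
theorem edgePoly_integral_delta (N : ℕ) (ξ : ℕ → ℝ) (l : ℕ → Polynomial ℝ)
    (hord : ∀ i j, i < j → j ≤ N → ξ i < ξ j)
    (hdeg : ∀ k, k ≤ N → (l k).natDegree ≤ N)
    (hlag : ∀ k m, k ≤ N → m ≤ N → (l k).eval (ξ m) = if k = m then 1 else 0) :
    ∀ i j, 1 ≤ i → i ≤ N → 1 ≤ j → j ≤ N →
      (∫ x in (ξ (j - 1))..(ξ j), (edgePoly l i).eval x) = if i = j then 1 else 0 := by
  intro i j hi1 hiN hj1 hjN
  have key : edgePoly l i = Polynomial.derivative (-∑ k ∈ Finset.range i, l k) := by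
    simp [edgePoly, map_neg, map_sum]
  rw [key, integral_derivative_eval]
  have hj1' : j - 1 ≤ N := le_trans (Nat.sub_le _ _) hjN
  have hsum : ∀ m, m ≤ N → (∑ k ∈ Finset.range i, l k).eval (ξ m)
      = if m < i then 1 else 0 := by
    intro m hm
    rw [Polynomial.eval_finset_sum]
    have : ∀ k ∈ Finset.range i, (l k).eval (ξ m) = if k = m then 1 else 0 := by
      intro k hk
      exact hlag k m (le_trans (Nat.le_of_lt_succ (Nat.lt_succ_of_lt (Finset.mem_range.mp hk))) (le_trans (Nat.le_of_lt_succ (Nat.lt_succ_of_le hiN)) le_rfl)) hm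
    rw [Finset.sum_congr rfl this, Finset.sum_ite_eq' (Finset.range i) m (fun _ => (1:ℝ))]
    simp [Finset.mem_range]
  simp only [Polynomial.eval_neg]
  rw [hsum j hjN, hsum (j-1) hj1']
  have hjm1 : j - 1 < j := Nat.sub_lt (lt_of_lt_of_le Nat.zero_lt_one hj1) Nat.zero_lt_one
  rcases lt_trichotomy i j with h | h | h
  · have h1 : ¬ j < i := by omega
    have h2 : ¬ j - 1 < i := by omega
    simp [h1, h2, Nat.ne_of_lt h]
  · subst h
    have h1 : ¬ i < i := lt_irrefl i
    have h2 : i - 1 < i := hjm1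
    simp [h1, h2]
  · have h1 : j < i := h
    have h2 : j - 1 < i := by omega
    simp [h1, h2, Nat.ne_of_gt h]
end

section
/- With E the 2D discrete divergence incidence matrix as above, the kernel of E restricted to fields vanishing on the boundary (v^x_{0,j} = v^x_{N,j} = v^y_{i,0} = v^y_{i,N} = 0) has dimension (N−1)², equal to the number of interior vertices of the grid, and consists exactly of discrete curls of vertex-based potentials: v^x_{i,j} = ψ_{i,j} − ψ_{i,j−1}, v^y_{i,j} = −(ψ_{i,j} − ψ_{i−1,j}) for a potential ψ on interior vertices. -/
/-- The space of discrete flux fields on an `N × N` grid: `v^x_{i,j}` for `0 ≤ i ≤ N`,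
`1 ≤ j ≤ N` (second index shifted to `Fin N`), and `v^y_{i,j}` for `1 ≤ i ≤ N`,
`0 ≤ j ≤ N` (first index shifted to `Fin N`). -/
abbrev FluxSpace (N : ℕ) := ((Fin (N + 1) → Fin N → ℝ) × (Fin N → Fin (N + 1) → ℝ))

/-- The discrete divergence (incidence) map:
`(E v)_{i,j} = v^x_{i,j} − v^x_{i−1,j} + v^y_{i,j} − v^y_{i,j−1}`. -/
noncomputable def discDiv (N : ℕ) : FluxSpace N →ₗ[ℝ] (Fin N → Fin N → ℝ) where
  toFun v := fun i j =>
    v.1 i.succ j - v.1 i.castSucc j + v.2 i j.succ - v.2 i j.castSucc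
  map_add' := by intro v w; funext i j; simp; ring
  map_smul' := by intro c v; funext i j; simp; ring

/-- The subspace of flux fields vanishing on the boundary:
`v^x_{0,j} = v^x_{N,j} = 0` and `v^y_{i,0} = v^y_{i,N} = 0`. -/
noncomputable def bdryZero (N : ℕ) : Submodule ℝ (FluxSpace N) where
  carrier := {v | (∀ j, v.1 0 j = 0) ∧ (∀ j, v.1 (Fin.last N) j = 0) ∧
    (∀ i, v.2 i 0 = 0) ∧ (∀ i, v.2 i (Fin.last N) = 0)}
  add_mem' := by
    rintro v w ⟨h1, h2, h3, h4⟩ ⟨g1, g2, g3, g4⟩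
    exact ⟨fun j => by simp [h1 j, g1 j], fun j => by simp [h2 j, g2 j],
      fun i => by simp [h3 i, g3 i], fun i => by simp [h4 i, g4 i]⟩
  zero_mem' := by exact ⟨fun j => rfl, fun j => rfl, fun i => rfl, fun i => rfl⟩
  smul_mem' := by
    rintro c v ⟨h1, h2, h3, h4⟩
    exact ⟨fun j => by simp [h1 j], fun j => by simp [h2 j],
      fun i => by simp [h3 i], fun i => by simp [h4 i]⟩

/-- The discrete curl of a vertex-based potential `ψ` (extended by zero on boundary
vertices): `v^x_{i,j} = ψ_{i,j} − ψ_{i,j−1}`, `v^y_{i,j} = −(ψ_{i,j} − ψ_{i−1,j})`. -/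
noncomputable def discCurl (N : ℕ) (ψ : Fin (N + 1) → Fin (N + 1) → ℝ) : FluxSpace N :=
  (fun i j => ψ i j.succ - ψ i j.castSucc, fun i j => -(ψ i.succ j - ψ i.castSucc j))

noncomputable def discCurlL (N : ℕ) : (Fin (N + 1) → Fin (N + 1) → ℝ) →ₗ[ℝ] FluxSpace N where
  toFun := discCurl N
  map_add' := by intro a b; unfold discCurl; refine Prod.ext ?_ ?_ <;> funext i j <;> simp <;> ring
  map_smul' := by intro c a; unfold discCurl; refine Prod.ext ?_ ?_ <;> funext i j <;> simp <;> ring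

lemma div_curl_zero (N : ℕ) (ψ : Fin (N + 1) → Fin (N + 1) → ℝ) :
    discDiv N (discCurl N ψ) = 0 := by
  funext i j
  simp [discDiv, discCurl]
  ring

lemma fin_zero_of_step {n : ℕ} (g : Fin (n + 1) → ℝ) (h0 : g 0 = 0)
    (h : ∀ j : Fin n, g j.succ = g j.castSucc) : ∀ j, g j = 0 := by
  intro j
  induction j using Fin.induction with
  | zero => exact h0
  | succ j ih => rw [h j]; exact ih

noncomputable def psiOf (N : ℕ) (v : FluxSpace N) : Fin (N + 1) → Fin (N + 1) → ℝ :=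
  fun i j => ∑ j' : Fin N, if (j' : ℕ) < (j : ℕ) then v.1 i j' else 0

lemma psiOf_zero (N : ℕ) (v : FluxSpace N) (i : Fin (N + 1)) : psiOf N v i 0 = 0 := by
  simp [psiOf]

lemma psiOf_diff (N : ℕ) (v : FluxSpace N) (i : Fin (N + 1)) (j : Fin N) :
    psiOf N v i j.succ - psiOf N v i j.castSucc = v.1 i j := by
  unfold psiOf
  rw [← Finset.sum_sub_distrib]
  have key : ∀ j' : Fin N,
      (if (j' : ℕ) < (j.succ : ℕ) then v.1 i j' else 0) -
        (if (j' : ℕ) < (j.castSucc : ℕ) then v.1 i j' else 0) =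
      if j' = j then v.1 i j' else 0 := by
    intro j'
    rcases eq_or_ne j' j with rfl | hne
    · simp
    · have hvne : (j' : ℕ) ≠ (j : ℕ) := fun h => hne (Fin.ext h)
      have hiff : ((j' : ℕ) < (j.succ : ℕ)) ↔ ((j' : ℕ) < (j.castSucc : ℕ)) := by
        simp only [Fin.val_succ, Fin.coe_castSucc]; omega
      rw [if_neg hne, if_congr hiff rfl rfl, sub_self]
  rw [Finset.sum_congr rfl (fun j' _ => key j'), Finset.sum_ite_eq' Finset.univ j]
  simp

noncomputable def potBdry (N : ℕ) : Submodule ℝ (Fin (N + 1) → Fin (N + 1) → ℝ) where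
  carrier := {ψ | (∀ j, ψ 0 j = 0) ∧ (∀ j, ψ (Fin.last N) j = 0) ∧
    (∀ i, ψ i 0 = 0) ∧ (∀ i, ψ i (Fin.last N) = 0)}
  add_mem' := by
    rintro v w ⟨h1, h2, h3, h4⟩ ⟨g1, g2, g3, g4⟩
    exact ⟨fun j => by simp [h1 j, g1 j], fun j => by simp [h2 j, g2 j],
      fun i => by simp [h3 i, g3 i], fun i => by simp [h4 i, g4 i]⟩
  zero_mem' := by exact ⟨fun j => rfl, fun j => rfl, fun i => rfl, fun i => rfl⟩
  smul_mem' := by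
    rintro c v ⟨h1, h2, h3, h4⟩
    exact ⟨fun j => by simp [h1 j], fun j => by simp [h2 j],
      fun i => by simp [h3 i], fun i => by simp [h4 i]⟩

lemma exists_pot (N : ℕ) (v : FluxSpace N) (hb : v ∈ bdryZero N)
    (hd : discDiv N v = 0) : psiOf N v ∈ potBdry N ∧ v = discCurl N (psiOf N v) := by
  obtain ⟨h1, h2, h3, h4⟩ := hb
  set ψ := psiOf N v with hψ
  have hψ0 : ∀ j, ψ 0 j = 0 := by
    intro j; simp [hψ, psiOf, h1]
  have hψlast : ∀ j, ψ (Fin.last N) j = 0 := by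
    intro j; simp [hψ, psiOf, h2]
  have hψc0 : ∀ i, ψ i 0 = 0 := fun i => psiOf_zero N v i
  -- the divergence-free identity, entrywise
  have hdiv : ∀ (i : Fin N) (j : Fin N),
      v.1 i.succ j - v.1 i.castSucc j + v.2 i j.succ - v.2 i j.castSucc = 0 := by
    intro i j
    have := congrFun (congrFun hd i) j
    simpa [discDiv] using this
  have hv2 : ∀ (i : Fin N) (j : Fin (N + 1)),
      v.2 i j = -(ψ i.succ j - ψ i.castSucc j) := by
    intro i j
    induction j using Fin.induction with
    | zero => rw [hψc0, hψc0, h3]; ring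
    | succ j ih =>
      have hd' := hdiv i j
      have e1 := psiOf_diff N v i.succ j
      have e2 := psiOf_diff N v i.castSucc j
      rw [← hψ] at e1 e2
      linarith
  have hψclast : ∀ i, ψ i (Fin.last N) = 0 := by
    apply fin_zero_of_step (fun i => ψ i (Fin.last N)) (hψ0 (Fin.last N))
    intro i
    have := hv2 i (Fin.last N)
    rw [h4 i] at this
    linarith
  refine ⟨⟨hψ0, hψlast, hψc0, hψclast⟩, ?_⟩
  refine Prod.ext ?_ ?_
  · funext i j
    have := psiOf_diff N v i j
    rw [← hψ] at this
    simpa [discCurl] using this.symm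
  · funext i j
    simpa [discCurl] using hv2 i j

lemma curl_mem (N : ℕ) (ψ : Fin (N + 1) → Fin (N + 1) → ℝ) (hψ : ψ ∈ potBdry N) :
    discCurl N ψ ∈ bdryZero N ⊓ LinearMap.ker (discDiv N) := by
  obtain ⟨h1, h2, h3, h4⟩ := hψ
  refine ⟨⟨?_, ?_, ?_, ?_⟩, ?_⟩
  · intro j; simp [discCurl, h1]
  · intro j; simp [discCurl, h2]
  · intro i; simp [discCurl, h3]
  · intro i; simp [discCurl, h4]
  · exact div_curl_zero N ψ

lemma mem_iff (N : ℕ) (v : FluxSpace N) :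
    v ∈ bdryZero N ⊓ LinearMap.ker (discDiv N) ↔
      ∃ ψ ∈ potBdry N, v = discCurl N ψ := by
  constructor
  · rintro ⟨hb, hk⟩
    obtain ⟨hm, he⟩ := exists_pot N v hb (by simpa using hk)
    exact ⟨psiOf N v, hm, he⟩
  · rintro ⟨ψ, hψ, rfl⟩
    exact curl_mem N ψ hψ

lemma ker_restrict (N : ℕ) :
    LinearMap.ker ((discCurlL N).comp (potBdry N).subtype) = ⊥ := by
  rw [LinearMap.ker_eq_bot']
  rintro ⟨ψ, h1, h2, h3, h4⟩ hm
  have hcurl : discCurl N ψ = 0 := hm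
  have hfst : ∀ i j, ψ i (Fin.succ j) - ψ i (Fin.castSucc j) = 0 := by
    intro i j
    have := congrFun (congrFun (congrArg Prod.fst hcurl) i) j
    simpa [discCurl] using this
  have : ∀ i j, ψ i j = 0 := by
    intro i
    apply fin_zero_of_step (ψ i) (h3 i)
    intro j
    have := hfst i j
    linarith
  exact Subtype.ext (funext fun i => funext fun j => this i j)

lemma range_restrict (N : ℕ) :
    LinearMap.range ((discCurlL N).comp (potBdry N).subtype) =
      bdryZero N ⊓ LinearMap.ker (discDiv N) := by
  ext v
  rw [mem_iff]
  constructor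
  · rintro ⟨⟨ψ, hψ⟩, rfl⟩
    exact ⟨ψ, hψ, rfl⟩
  · rintro ⟨ψ, hψ, rfl⟩
    exact ⟨⟨ψ, hψ⟩, rfl⟩

noncomputable def potEquiv (N : ℕ) :
    potBdry N ≃ₗ[ℝ] ({i : Fin (N + 1) // i ≠ 0 ∧ i ≠ Fin.last N} →
      {i : Fin (N + 1) // i ≠ 0 ∧ i ≠ Fin.last N} → ℝ) where
  toFun ψ := fun i j => ψ.1 i.1 j.1
  map_add' := fun a b => rfl
  map_smul' := fun c a => rfl
  invFun g := ⟨fun i j =>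
      if h : (i ≠ 0 ∧ i ≠ Fin.last N) ∧ (j ≠ 0 ∧ j ≠ Fin.last N) then g ⟨i, h.1⟩ ⟨j, h.2⟩ else 0,
    by
      refine ⟨?_, ?_, ?_, ?_⟩
      · intro j; dsimp only; rw [dif_neg]; simp
      · intro j; dsimp only; rw [dif_neg]; simp
      · intro i; dsimp only; rw [dif_neg]; simp
      · intro i; dsimp only; rw [dif_neg]; simp⟩
  left_inv := by
    rintro ⟨ψ, h1, h2, h3, h4⟩
    apply Subtype.ext
    funext i j
    dsimp only
    by_cases h : (i ≠ 0 ∧ i ≠ Fin.last N) ∧ (j ≠ 0 ∧ j ≠ Fin.last N)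
    · simp [dif_pos h]
    · rw [dif_neg h]
      push_neg at h
      by_cases hi0 : i = 0
      · rw [hi0, h1]
      by_cases hil : i = Fin.last N
      · rw [hil, h2]
      by_cases hj0 : j = 0
      · rw [hj0, h3]
      · rw [h ⟨hi0, hil⟩ hj0, h4]
  right_inv := by
    intro g
    funext i j
    dsimp only
    rw [dif_pos ⟨i.2, j.2⟩]

lemma card_interior (N : ℕ) (hN : 1 ≤ N) :
    Fintype.card {i : Fin (N + 1) // i ≠ 0 ∧ i ≠ Fin.last N} = N - 1 := by
  rw [Fintype.card_subtype]
  have hs : (Finset.univ.filter (fun i : Fin (N + 1) => i ≠ 0 ∧ i ≠ Fin.last N)) =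
      Finset.univ \ {0, Fin.last N} := by
    ext i; simp [not_or]
  rw [hs, Finset.card_sdiff_of_subset (Finset.subset_univ _), Finset.card_univ, Fintype.card_fin]
  have h02 : (0 : Fin (N + 1)) ≠ Fin.last N := by
    intro h
    have := congrArg Fin.val h
    simp [Fin.val_last] at this
    omega
  rw [Finset.card_insert_of_notMem (by simpa using h02), Finset.card_singleton]
  omega

lemma finrank_K (N : ℕ) (hN : 1 ≤ N) :
    Module.finrank ℝ ↥(bdryZero N ⊓ LinearMap.ker (discDiv N)) = (N - 1) ^ 2 := by
  have h1 := LinearMap.finrank_range_add_finrank_ker ((discCurlL N).comp (potBdry N).subtype)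
  rw [range_restrict, ker_restrict, finrank_bot, add_zero] at h1
  rw [h1, (potEquiv N).finrank_eq]
  rw [Module.finrank_pi_fintype ℝ]
  simp [Module.finrank_pi, card_interior N hN, sq]

/-- On an `N × N` tensor-product grid, the kernel of the discrete divergence `E`
restricted to flux fields vanishing on the boundary has dimension `(N − 1)²`, the number
of interior vertices, and consists exactly of the discrete curls of potentials `ψ` defined
on interior vertices (extended by zero to boundary vertices). -/
theorem discDiv_kernel_is_discrete_curls (N : ℕ) (hN : 1 ≤ N) :
    Module.finrank ℝ ↥(bdryZero N ⊓ LinearMap.ker (discDiv N)) = (N - 1) ^ 2 ∧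
      ∀ v : FluxSpace N,
        v ∈ bdryZero N ⊓ LinearMap.ker (discDiv N) ↔
          ∃ ψ : Fin (N + 1) → Fin (N + 1) → ℝ,
            (∀ j, ψ 0 j = 0 ∧ ψ (Fin.last N) j = 0 ∧ ψ j 0 = 0 ∧ ψ j (Fin.last N) = 0) ∧
              v = discCurl N ψ := by
  refine ⟨finrank_K N hN, fun v => ?_⟩
  rw [mem_iff]
  constructor
  · rintro ⟨ψ, ⟨h1, h2, h3, h4⟩, rfl⟩
    exact ⟨ψ, fun j => ⟨h1 j, h2 j, h3 j, h4 j⟩, rfl⟩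
  · rintro ⟨ψ, h, rfl⟩
    exact ⟨ψ, ⟨fun j => (h j).1, fun j => (h j).2.1, fun i => (h i).2.2.1,
      fun i => (h i).2.2.2⟩, rfl⟩
end
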